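/- Let P be a finite poset. A subset I ⊆ Inc(P) is reversible if and only if I contains no strict alternating cycle, i.e., there is no strict alternating cycle in P all of whose pairs belong to I. -/

import Mathlib

/-!
Common definitions for formalizing dimension theory of finite posets,
following Kozik–Micek–Trotter, "Dimension is polynomial in height for
posets with planar cover graphs".
-/

namespace PlanarDim

variable {α : Type*}

/-- Two elements of a poset are incomparable. -/
def Incomp [PartialOrder α] (a b : α) : Prop := ¬ a ≤ b ∧ ¬ b ≤ a

/-- `Inc(P)`: the set of ordered pairs of incomparable elements. -/
def incPairs (α : Type*) [PartialOrder α] : Set (α × α) := {p | Incomp p.1 p.2}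

/-- A linear order `L` on the ground set is a linear extension of the partial order. -/
def IsLinExt [PartialOrder α] (L : LinearOrder α) : Prop :=
  ∀ x y : α, x ≤ y → L.le x y

/-- A set `I` of ordered pairs is reversible if some linear extension of the
partial order reverses every pair of `I` (i.e. puts the second coordinate
strictly below the first). -/
def Reversible [PartialOrder α] (I : Set (α × α)) : Prop :=
  ∃ L : LinearOrder α, IsLinExt L ∧ ∀ p ∈ I, L.lt p.2 p.1

/-- The cyclic successor on `Fin k`. -/
def nextIdx {k : ℕ} (i : Fin k) : Fin k := ⟨(i.1 + 1) % k, Nat.mod_lt _ i.pos⟩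

/-- `((x 0, y 0), …, (x (k-1), y (k-1)))` is an alternating cycle:
`k ≥ 2`, each pair is incomparable, and `x i ≤ y (i+1)` cyclically. -/
def IsAltCycle [PartialOrder α] {k : ℕ} (x y : Fin k → α) : Prop :=
  2 ≤ k ∧ (∀ i, Incomp (x i) (y i)) ∧ ∀ i, x i ≤ y (nextIdx i)

/-- A strict alternating cycle: `k ≥ 2`, each pair is incomparable, and
`x i ≤ y j` holds exactly when `j = i + 1` cyclically. -/
def IsStrictAltCycle [PartialOrder α] {k : ℕ} (x y : Fin k → α) : Prop :=
  2 ≤ k ∧ (∀ i, Incomp (x i) (y i)) ∧ ∀ i j, x i ≤ y j ↔ j = nextIdx i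

/-- `dim(I)`: the least `d ≥ 1` such that `I` can be covered by `d` reversible
subsets of `Inc(P)`. -/
noncomputable def dimI [PartialOrder α] (I : Set (α × α)) : ℕ :=
  sInf {d | 1 ≤ d ∧ ∃ J : Fin d → Set (α × α),
    (∀ i, J i ⊆ incPairs α ∧ Reversible (J i)) ∧ I ⊆ ⋃ i, J i}

/-- The Dushnik–Miller dimension of a poset: the least `d ≥ 1` for which there
are linear orders `L 0, …, L (d-1)` on the ground set with `x ≤ y` in the poset
iff `x ≤ y` in every `L i`. -/
noncomputable def posetDim (α : Type*) [PartialOrder α] : ℕ :=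
  sInf {d | 1 ≤ d ∧ ∃ L : Fin d → LinearOrder α,
    ∀ x y : α, x ≤ y ↔ ∀ i, (L i).le x y}

/-- The height of a poset: the maximum number of elements in a chain. -/
noncomputable def posetHeight (α : Type*) [PartialOrder α] : ℕ :=
  sSup {n | ∃ s : Finset α, s.card = n ∧ IsChain (· ≤ ·) (↑s : Set α)}

/-- The cover graph of a poset: distinct `x` and `y` are adjacent iff one
covers the other. -/
def coverGraph (α : Type*) [PartialOrder α] : SimpleGraph α where
  Adj x y := x ⋖ y ∨ y ⋖ x
  symm := ⟨fun x y h => Or.symm h⟩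
  loopless := ⟨fun x h => by rcases h with h | h <;> exact absurd h.lt (lt_irrefl x)⟩

/-- `Min(P)`: the set of minimal elements. -/
def minSet (α : Type*) [PartialOrder α] : Set α := {x | IsMin x}

/-- `Max(P)`: the set of maximal elements. -/
def maxSet (α : Type*) [PartialOrder α] : Set α := {x | IsMax x}

/-- `Inc(Min(P), Max(P))`: incomparable pairs `(a, b)` with `a` minimal and
`b` maximal. -/
def incMinMax (α : Type*) [PartialOrder α] : Set (α × α) :=
  {p | p ∈ incPairs α ∧ p.1 ∈ minSet α ∧ p.2 ∈ maxSet α}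

/-- `WReach_r[G, σ, v]`: the set of vertices `u` weakly `r`-reachable from `v`
in the ordering `σ`: there is a path from `v` to `u` of length at most `r` all
of whose vertices are `≥ u` in `σ`. -/
def WReach (G : SimpleGraph α) (σ : LinearOrder α) (r : ℕ) (v : α) : Set α :=
  {u | ∃ p : G.Walk v u, p.IsPath ∧ p.length ≤ r ∧ ∀ w ∈ p.support, σ.le u w}

/-- The weak `r`-coloring number of a finite graph: the minimum over vertex
orderings `σ` of the maximum over vertices `v` of `|WReach_r[G, σ, v]|`. -/
noncomputable def wcol (α : Type*) [Fintype α] (G : SimpleGraph α) (r : ℕ) : ℕ :=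
  sInf {c | ∃ σ : LinearOrder α,
    c = Finset.univ.sup fun v => (WReach G σ r v).ncard}

end PlanarDim

section AuxSAC

open PlanarDim Relation List

variable {α : Type*} [PartialOrder α] {I : Set (α × α)}

/-- Step relation on incomparable pairs: `p` can be followed by `q`. -/
private def eRel (I : Set (α × α)) : (α × α) → (α × α) → Prop :=
  fun p q => p ∈ I ∧ q ∈ I ∧ p.1 ≤ q.2

private lemma mem_of_chain_eRel {c : α × α} {l : List (α × α)}
    (h : List.Chain (eRel I) c l) : ∀ q ∈ l, q ∈ I := by
  induction l generalizing c with
  | nil => simp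
  | cons d l ih =>
    intro q hq
    have h' : List.IsChain (eRel I) (c :: d :: l) := h
    rw [List.isChain_cons_cons] at h'
    rcases List.mem_cons.mp hq with rfl | hq
    · exact h'.1.2.1
    · exact ih h'.2 q hq

set_option maxHeartbeats 1000000 in
/-- From a cycle in the step relation we get an alternating cycle. -/
private lemma altCycle_of_transGen (hI : I ⊆ incPairs α) {p : α × α}
    (h : Relation.TransGen (eRel I) p p) :
    ∃ (k : ℕ) (x y : Fin k → α), IsAltCycle x y ∧ ∀ i, (x i, y i) ∈ I := by
  obtain ⟨c, hpc, hcp⟩ := Relation.TransGen.head'_iff.mp h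
  obtain ⟨l, hchain, hlast⟩ := List.exists_isChain_cons_of_relationReflTransGen hcp
  set m : List (α × α) := c :: l with hm
  have hmlen : 0 < m.length := by simp [hm]
  have hmem : ∀ q ∈ m, q ∈ I := by
    intro q hq
    rcases List.mem_cons.mp hq with rfl | hq
    · exact hpc.2.1
    · exact mem_of_chain_eRel hchain q hq
  have hk : 2 ≤ m.length := by
    by_contra hcon
    have hl0 : l = [] := by
      have : m.length = 1 := by omega
      simpa [hm] using this
    subst hl0
    have hcps : c = p := by simpa [hm] using hlast
    subst hcps
    exact (hI hpc.1).1 hpc.2.2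
  have hlastget : m.get ⟨m.length - 1, Nat.sub_lt hmlen Nat.one_pos⟩ = p := by
    rw [List.get_length_sub_one]
    exact hlast
  have hch' : List.Chain' (eRel I) m := hchain
  have hget0 : ∀ hh : 0 < m.length, m.get ⟨0, hh⟩ = c := fun _ => rfl
  clear_value m
  clear hm hchain hlast hcp h
  refine ⟨m.length, fun i => (m.get i).1, fun i => (m.get i).2, ⟨hk, ?_, ?_⟩, ?_⟩
  · intro i
    exact hI (hmem _ (m.get_mem i))
  · intro i
    rcases Nat.lt_or_ge (i.1 + 1) m.length with hlt | hge
    · have hnext : nextIdx i = ⟨i.1 + 1, hlt⟩ := by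
        simp only [nextIdx]
        congr 1
        exact Nat.mod_eq_of_lt hlt
      rw [hnext]
      exact (List.isChain_iff_getElem.mp hch' i.1 (by omega)).2.2
    · have hi1 : i.1 = m.length - 1 := by omega
      have hnext : nextIdx i = ⟨0, by omega⟩ := by
        simp only [nextIdx]
        congr 1
        rw [hi1]
        simp [Nat.sub_add_cancel (by omega : 1 ≤ m.length)]
      rw [hnext]
      have hieq : i = ⟨m.length - 1, by omega⟩ := by
        apply Fin.ext; simp [hi1]
      have hp' : m.get i = p := by rw [hieq]; exact hlastget
      have e1 : (m.get i).1 = p.1 := congrArg Prod.fst hp'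
      have e2 : ∀ hh : 0 < m.length, (m.get ⟨0, hh⟩).2 = c.2 :=
        fun hh => congrArg Prod.snd (hget0 hh)
      show (m.get i).1 ≤ (m.get ⟨0, by omega⟩).2
      exact e1.trans_le (hpc.2.2.trans_eq (e2 _).symm)
  · intro i
    have hg := hmem _ (m.get_mem i)
    simpa using hg

private def rRel (I : Set (α × α)) : α → α → Prop :=
  fun a b => a < b ∨ (b, a) ∈ I

private lemma key_reflTransGen {a b : α}
    (h : Relation.ReflTransGen (rRel I) a b) :
    a ≤ b ∨ ∃ p q : α × α, p ∈ I ∧ q ∈ I ∧ a ≤ p.2 ∧ q.1 ≤ b ∧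
      Relation.ReflTransGen (eRel I) p q := by
  induction h with
  | refl => exact Or.inl le_rfl
  | @tail b c _ hbc ih =>
    rcases ih with hab | ⟨p, q, hp, hq, hap, hqb, hpq⟩
    · rcases hbc with h' | h'
      · exact Or.inl (hab.trans h'.le)
      · exact Or.inr ⟨(c, b), (c, b), h', h', hab, le_rfl, Relation.ReflTransGen.refl⟩
    · rcases hbc with h' | h'
      · exact Or.inr ⟨p, q, hp, hq, hap, hqb.trans h'.le, hpq⟩
      · exact Or.inr ⟨p, (c, b), hp, h', hap, le_rfl, hpq.tail ⟨hq, h', hqb⟩⟩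

private lemma acyclic_of_no_alt (hI : I ⊆ incPairs α)
    (h : ¬ ∃ (k : ℕ) (x y : Fin k → α), IsAltCycle x y ∧ ∀ i, (x i, y i) ∈ I)
    (a : α) : ¬ Relation.TransGen (rRel I) a a := by
  intro ha
  obtain ⟨b, hab, hba⟩ := Relation.TransGen.head'_iff.mp ha
  rcases key_reflTransGen hba with hble | ⟨p, q, hp, hq, hbp, hqa, hpq⟩
  · rcases hab with h' | h'
    · exact absurd (h'.trans_le hble) (lt_irrefl a)
    · exact (hI h').1 hble
  · rcases hab with h' | h'
    · exact h (altCycle_of_transGen hI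
        (Relation.TransGen.tail' hpq ⟨hq, hp, hqa.trans (h'.le.trans hbp)⟩))
    · exact h (altCycle_of_transGen hI
        (Relation.TransGen.tail' (hpq.tail ⟨hq, h', hqa⟩) ⟨h', hp, hbp⟩))

/-- If `I` contains no alternating cycle at all, then `I` is reversible. -/
private lemma reversible_of_no_alt (hI : I ⊆ incPairs α)
    (h : ¬ ∃ (k : ℕ) (x y : Fin k → α), IsAltCycle x y ∧ ∀ i, (x i, y i) ∈ I) :
    Reversible I := by
  classical
  set pr : α → α → Prop := fun a b => a = b ∨ Relation.TransGen (rRel I) a b with hpr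
  haveI hPO : IsPartialOrder α pr :=
    { refl := fun a => Or.inl rfl
      trans := by
        rintro a b c (rfl | h1) (rfl | h2)
        · exact Or.inl rfl
        · exact Or.inr h2
        · exact Or.inr h1
        · exact Or.inr (h1.trans h2)
      antisymm := by
        rintro a b h1 h2
        rcases h1 with rfl | h1
        · rfl
        rcases h2 with rfl | h2
        · rfl
        exact absurd (h1.trans h2) (acyclic_of_no_alt hI h a) }
  obtain ⟨s, hs, hsub⟩ := extend_partialOrder pr
  haveI := hs
  refine ⟨{ le := s
            lt := fun a b => s a b ∧ ¬ s b a
            le_refl := refl_of s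
            le_trans := fun a b c => trans_of s
            lt_iff_le_not_ge := fun _ _ => Iff.rfl
            le_antisymm := fun a b => antisymm_of s
            le_total := total_of s
            toDecidableLE := Classical.decRel s }, ?_, ?_⟩
  · intro x y hxy
    rcases eq_or_lt_of_le hxy with rfl | hlt
    · exact refl_of s x
    · exact hsub _ _ (Or.inr (Relation.TransGen.single (Or.inl hlt)))
  · rintro ⟨a, b⟩ hab
    have h1 : s b a := hsub _ _ (Or.inr (Relation.TransGen.single (Or.inr hab)))
    have h2 : ¬ s a b := by
      intro h2
      have : a = b := antisymm_of s h2 h1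
      exact (hI hab).1 (le_of_eq this)
    exact ⟨h1, h2⟩

/-- A shortest alternating cycle is strict. -/
private lemma strict_of_alt (hI : I ⊆ incPairs α)
    (h : ∃ (k : ℕ) (x y : Fin k → α), IsAltCycle x y ∧ ∀ i, (x i, y i) ∈ I) :
    ∃ (k : ℕ) (x y : Fin k → α), IsStrictAltCycle x y ∧ ∀ i, (x i, y i) ∈ I := by
  classical
  have hex : ∃ k : ℕ, ∃ (x y : Fin k → α), IsAltCycle x y ∧ ∀ i, (x i, y i) ∈ I := h
  set k := Nat.find hex with hkdef
  obtain ⟨x, y, ⟨hk2, hinc, halt⟩, hmem⟩ := Nat.find_spec hex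
  refine ⟨k, x, y, ⟨hk2, hinc, fun i j => ⟨?_, ?_⟩⟩, hmem⟩
  · -- forward: x i ≤ y j → j = nextIdx i
    intro hxy
    by_contra hne
    have hij : i ≠ j := by
      rintro rfl
      exact (hinc i).1 hxy
    have hij' : i.1 ≠ j.1 := fun hh => hij (Fin.ext hh)
    set d : ℕ := (i.1 + k - j.1) % k with hd
    have hkpos : 0 < k := by omega
    have hdlt : d < k := Nat.mod_lt _ hkpos
    have hd1 : 1 ≤ d := by
      rcases Nat.eq_zero_or_pos d with h0 | h1
      · exfalso
        have hdvd : k ∣ (i.1 + k - j.1) := Nat.dvd_of_mod_eq_zero h0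
        have hji : j.1 < k := j.2
        have hii : i.1 < k := i.2
        have hvpos : 0 < i.1 + k - j.1 := by omega
        obtain ⟨c, hc⟩ := hdvd
        have hveq : i.1 + k - j.1 = k := by
          rcases Nat.lt_or_ge c 2 with hcc | hcc
          · interval_cases c <;> omega
          · exfalso
            have h2k : 2 * k ≤ k * c := by
              calc 2 * k = k * 2 := by ring
                _ ≤ k * c := Nat.mul_le_mul_left _ hcc
            omega
        omega
      · exact h1
    have hdne : d ≠ k - 1 := by
      intro hdk
      apply hne
      have h1 : (i.1 + k - j.1) % k = k - 1 := by rw [← hd, hdk]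
      have hji : j.1 < k := j.2
      have hii : i.1 < k := i.2
      apply Fin.ext
      show j.1 = (i.1 + 1) % k
      rcases Nat.lt_or_ge (i.1 + k - j.1) k with hv | hv
      · have hveq : i.1 + k - j.1 = k - 1 := by rw [← Nat.mod_eq_of_lt hv, h1]
        have hj' : j.1 = i.1 + 1 := by omega
        rw [hj', Nat.mod_eq_of_lt (by omega)]
      · have hmod : (i.1 + k - j.1) % k = i.1 + k - j.1 - k := by
          rw [Nat.mod_eq_sub_mod hv, Nat.mod_eq_of_lt (by omega)]
        have hij0 : i.1 = k - 1 ∧ j.1 = 0 := by omega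
        obtain ⟨hi', hj'⟩ := hij0
        rw [hj', hi']
        have hkk : k - 1 + 1 = k := by omega
        rw [hkk, Nat.mod_self]
    set k' : ℕ := d + 1 with hk'
    have hk'lt : k' < k := by omega
    have hk'2 : 2 ≤ k' := by omega
    set g : Fin k' → Fin k := fun t => ⟨(j.1 + t.1) % k, Nat.mod_lt _ hkpos⟩ with hg
    have hg0 : g ⟨0, by omega⟩ = j := by
      apply Fin.ext
      simp [hg, Nat.mod_eq_of_lt j.2]
    have hgd : g ⟨d, by omega⟩ = i := by
      apply Fin.ext
      show (j.1 + (i.1 + k - j.1) % k) % k = i.1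
      rw [Nat.add_mod_mod]
      have hsum : j.1 + (i.1 + k - j.1) = i.1 + k := by
        have : j.1 < k := j.2
        omega
      rw [hsum, Nat.add_mod_right, Nat.mod_eq_of_lt i.2]
    have halt' : ∀ t : Fin k', x (g t) ≤ y (g (nextIdx t)) := by
      intro t
      rcases Nat.lt_or_ge (t.1 + 1) k' with hlt | hge
      · have hnt : nextIdx t = ⟨t.1 + 1, hlt⟩ := by
          simp only [nextIdx]
          congr 1
          exact Nat.mod_eq_of_lt hlt
        rw [hnt]
        have hgeq : g ⟨t.1 + 1, hlt⟩ = nextIdx (g t) := by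
          apply Fin.ext
          show (j.1 + (t.1 + 1)) % k = ((j.1 + t.1) % k + 1) % k
          rw [Nat.mod_add_mod, Nat.add_assoc]
        rw [hgeq]
        exact halt (g t)
      · have htd : t.1 = d := by omega
        have hnt : nextIdx t = ⟨0, by omega⟩ := by
          simp only [nextIdx]
          congr 1
          rw [htd]
          simp [hk']
        have htdf : t = ⟨d, by omega⟩ := Fin.ext htd
        rw [hnt, hg0, htdf, hgd]
        exact hxy
    exact absurd
      (⟨fun t => x (g t), fun t => y (g t),
        ⟨hk'2, fun t => hinc (g t), halt'⟩, fun t => hmem (g t)⟩ :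
        ∃ x y : Fin k' → α, IsAltCycle x y ∧ ∀ i, (x i, y i) ∈ I)
      (Nat.find_min hex hk'lt)
  · intro hj
    subst hj
    exact halt i

end AuxSAC

open PlanarDim in
/-- A subset `I ⊆ Inc(P)` of a finite poset is reversible if
and only if `I` contains no strict alternating cycle. -/
theorem reversible_iff_no_strict_alternating_cycle
    {α : Type*} [Fintype α] [PartialOrder α]
    (I : Set (α × α)) (hI : I ⊆ incPairs α) :
    Reversible I ↔
      ¬ ∃ (k : ℕ) (x y : Fin k → α),
        IsStrictAltCycle x y ∧ ∀ i, (x i, y i) ∈ I := by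
  constructor
  · rintro ⟨L, hL, hrev⟩ ⟨k, x, y, ⟨hk2, hinc, hiff⟩, hmem⟩
    have hkpos : 0 < k := by omega
    have hstep : ∀ i : Fin k, L.lt (y i) (y (nextIdx i)) := by
      intro i
      exact @lt_of_lt_of_le α L.toPartialOrder.toPreorder _ _ _
        (hrev _ (hmem i)) (hL _ _ ((hiff i (nextIdx i)).mpr rfl))
    have main : ∀ n : ℕ,
        L.lt (y ⟨0, hkpos⟩) (y ⟨(n + 1) % k, Nat.mod_lt _ hkpos⟩) := by
      intro n
      induction n with
      | zero => exact hstep ⟨0, hkpos⟩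
      | succ n ih =>
        have h2 := hstep ⟨(n + 1) % k, Nat.mod_lt _ hkpos⟩
        have hne : nextIdx (⟨(n + 1) % k, Nat.mod_lt _ hkpos⟩ : Fin k) =
            ⟨(n + 1 + 1) % k, Nat.mod_lt _ hkpos⟩ := by
          apply Fin.ext
          show ((n + 1) % k + 1) % k = (n + 1 + 1) % k
          rw [Nat.mod_add_mod]
        rw [hne] at h2
        exact @lt_trans α L.toPartialOrder.toPreorder _ _ _ ih h2
    have hfin := main (k - 1)
    have hzero : (⟨(k - 1 + 1) % k, Nat.mod_lt _ hkpos⟩ : Fin k) = ⟨0, hkpos⟩ := by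
      apply Fin.ext
      show (k - 1 + 1) % k = 0
      have hkk : k - 1 + 1 = k := by omega
      rw [hkk, Nat.mod_self]
    rw [hzero] at hfin
    exact @lt_irrefl α L.toPartialOrder.toPreorder _ hfin
  · intro h
    apply reversible_of_no_alt hI
    intro halt
    exact h (strict_of_alt hI halt)
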